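/- For n > 1 and any integer d with 1 ≤ d ≤ n−1, the number of permutations π of {1,…,n} with cd(π) = d and d(π) = d equals (n−d)·A_{n−1,d}. -/

import Mathlib

/-- Number of descents of a permutation of `{1,...,n}` (here `Fin n`, 0-indexed):
the number of positions `i` with `1 ≤ i ≤ n-1` and `π(i) > π(i+1)`. -/
def numDescents (n : ℕ) (π : Equiv.Perm (Fin n)) : ℕ :=
  ((Finset.range (n - 1)).filter (fun i =>
    ∃ h : i + 1 < n, π ⟨i + 1, h⟩ < π ⟨i, Nat.lt_of_succ_lt h⟩)).card

/-- `π` has a cyclic descent at `n` if `π(n) > π(1)`. -/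
def hasCyclicDescentAtLast (n : ℕ) (π : Equiv.Perm (Fin n)) : Prop :=
  ∃ h : 0 < n, π ⟨0, h⟩ < π ⟨n - 1, Nat.sub_lt h Nat.one_pos⟩

instance (n : ℕ) (π : Equiv.Perm (Fin n)) : Decidable (hasCyclicDescentAtLast n π) :=
  exists_prop_decidable _

/-- Number of cyclic descents: `d(π)+1` if `π` has a cyclic descent at `n`, else `d(π)`. -/
def numCyclicDescents (n : ℕ) (π : Equiv.Perm (Fin n)) : ℕ :=
  numDescents n π + if hasCyclicDescentAtLast n π then 1 else 0

/-- The k-riffle shuffle measure `R_{k,n}(π) = binom(n+k-d(π)-1, n) / k^n`. -/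
noncomputable def riffle (k n : ℕ) (π : Equiv.Perm (Fin n)) : ℝ :=
  (Nat.choose (n + k - numDescents n π - 1) n : ℝ) / (k : ℝ) ^ n

/-- The cut-then-k-riffle-shuffle measure
`C_{k,n}(π) = binom(n+k-cd(π)-1, n-1) / (n·k^(n-1))`. -/
noncomputable def cutRiffle (k n : ℕ) (π : Equiv.Perm (Fin n)) : ℝ :=
  (Nat.choose (n + k - numCyclicDescents n π - 1) (n - 1) : ℝ) / ((n : ℝ) * (k : ℝ) ^ (n - 1))

/-- Eulerian number `A_{m,j}`: the number of permutations of `m` symbols with `j-1` descents. -/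
def eulerianA (m j : ℕ) : ℕ :=
  (Finset.univ.filter (fun π : Equiv.Perm (Fin m) => numDescents m π = j - 1)).card

open Finset Equiv

variable {m : ℕ}

/-- cyclic descent set -/
def Dset (m : ℕ) (π : Equiv.Perm (Fin (m+1))) : Finset (Fin (m+1)) :=
  Finset.univ.filter (fun i => π (i+1) < π i)

lemma numDescents_eq (π : Equiv.Perm (Fin (m+1))) :
    numDescents (m+1) π
      = (Finset.univ.filter (fun i : Fin (m+1) => π (i+1) < π i ∧ i ≠ Fin.last m)).card := by
  unfold numDescents
  rw [Nat.add_sub_cancel]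
  apply Finset.card_nbij' (fun i => (⟨i % (m+1), Nat.mod_lt _ (Nat.succ_pos m)⟩ : Fin (m+1)))
      (fun i => (i : ℕ))
  · intro a ha
    simp only [Finset.mem_coe, Finset.mem_filter, Finset.mem_range] at ha
    obtain ⟨ham, h, hlt⟩ := ha
    have hmod : a % (m+1) = a := Nat.mod_eq_of_lt (by omega)
    simp only [Finset.mem_coe, Finset.mem_filter, Finset.mem_univ, true_and]
    constructor
    · have h1 : (⟨a % (m+1), Nat.mod_lt _ (Nat.succ_pos m)⟩ : Fin (m+1)) + 1 = ⟨a+1, h⟩ := by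
        apply Fin.ext
        simp [Fin.add_def, hmod, Nat.mod_eq_of_lt h]
      rw [h1]
      convert hlt using 2
      apply Fin.ext; simp [hmod]
    · intro hc
      have := congrArg Fin.val hc
      simp [hmod, Fin.last] at this
      omega
  · intro b hb
    simp only [Finset.mem_coe, Finset.mem_filter, Finset.mem_univ, true_and] at hb
    obtain ⟨hlt, hne⟩ := hb
    have : (b : ℕ) < m := by
      have := b.isLt
      rcases Nat.lt_or_ge (b : ℕ) m with h | h
      · exact h
      · exfalso; apply hne; apply Fin.ext; simp [Fin.last]; omega
    simp only [Finset.mem_coe]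
    refine Finset.mem_filter.2 ⟨Finset.mem_range.2 this, by omega, ?_⟩
    convert hlt using 2 <;> apply Fin.ext <;>
      simp [Fin.add_def, Nat.mod_eq_of_lt (show (b:ℕ)+1 < m+1 by omega)]
  · intro a ha
    simp only [Finset.mem_coe, Finset.mem_filter, Finset.mem_range] at ha
    simp [Nat.mod_eq_of_lt (show a < m+1 by omega)]
  · intro b hb
    apply Fin.ext
    simp [Nat.mod_eq_of_lt b.isLt]
lemma Dset_card_eq (π : Equiv.Perm (Fin (m+1))) :
    (Dset m π).card
      = numDescents (m+1) π + if π 0 < π (Fin.last m) then 1 else 0 := by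
  rw [numDescents_eq]
  unfold Dset
  have hsplit : Finset.univ.filter (fun i : Fin (m+1) => π (i+1) < π i)
      = (Finset.univ.filter (fun i : Fin (m+1) => π (i+1) < π i ∧ i ≠ Fin.last m))
        ∪ (Finset.univ.filter (fun i : Fin (m+1) => π (i+1) < π i ∧ i = Fin.last m)) := by
    ext i
    simp only [Finset.mem_filter, Finset.mem_union, Finset.mem_univ, true_and]
    by_cases h : i = Fin.last m <;> simp [h]
  rw [hsplit, Finset.card_union_of_disjoint]
  · congr 1
    have hlast : Fin.last m + 1 = 0 := by
      apply Fin.ext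
      simp [Fin.add_def, Fin.last]
    by_cases h : π 0 < π (Fin.last m)
    · rw [if_pos h]
      rw [show (Finset.univ.filter (fun i : Fin (m+1) => π (i+1) < π i ∧ i = Fin.last m))
          = {Fin.last m} from ?_, Finset.card_singleton]
      ext i
      simp only [Finset.mem_filter, Finset.mem_univ, true_and, Finset.mem_singleton]
      constructor
      · rintro ⟨_, h2⟩; exact h2
      · rintro rfl; exact ⟨by rwa [hlast], rfl⟩
    · rw [if_neg h]
      rw [Finset.card_eq_zero]
      ext i
      simp only [Finset.mem_filter, Finset.mem_univ, true_and, Finset.notMem_empty,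
        iff_false, not_and]
      rintro h1 rfl
      rw [hlast] at h1
      exact h h1
  · rw [Finset.disjoint_filter]
    rintro i _ ⟨_, hne⟩ ⟨_, rfl⟩
    exact hne rfl

lemma hasCyclic_iff (π : Equiv.Perm (Fin (m+1))) :
    hasCyclicDescentAtLast (m+1) π ↔ π 0 < π (Fin.last m) := by
  unfold hasCyclicDescentAtLast
  constructor
  · rintro ⟨h, hlt⟩
    convert hlt using 2 <;> apply Fin.ext <;> simp [Fin.last]
  · intro h
    refine ⟨Nat.succ_pos m, ?_⟩
    convert h using 2 <;> apply Fin.ext <;> simp [Fin.last]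

lemma numCyclicDescents_eq (π : Equiv.Perm (Fin (m+1))) :
    numCyclicDescents (m+1) π = (Dset m π).card := by
  rw [Dset_card_eq]
  unfold numCyclicDescents
  congr 1
  simp [hasCyclic_iff]
/-- rotation: `(rot k π) i = π (i + k)` -/
def rot (k : Fin (m+1)) (π : Equiv.Perm (Fin (m+1))) : Equiv.Perm (Fin (m+1)) :=
  (Equiv.addRight k).trans π

lemma rot_apply (k : Fin (m+1)) (π : Equiv.Perm (Fin (m+1))) (i : Fin (m+1)) :
    rot k π i = π (i + k) := rfl

lemma rot_rot (k j : Fin (m+1)) (π : Equiv.Perm (Fin (m+1))) :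
    rot k (rot j π) = rot (k + j) π := by
  ext i
  simp [rot_apply, add_assoc]

lemma mem_Dset_rot (k : Fin (m+1)) (π : Equiv.Perm (Fin (m+1))) (i : Fin (m+1)) :
    i ∈ Dset m (rot k π) ↔ i + k ∈ Dset m π := by
  unfold Dset
  rw [Finset.mem_filter, Finset.mem_filter]
  simp only [Finset.mem_univ, true_and, rot_apply]
  rw [add_right_comm]

lemma card_Dset_rot (k : Fin (m+1)) (π : Equiv.Perm (Fin (m+1))) :
    (Dset m (rot k π)).card = (Dset m π).card := by
  apply Finset.card_nbij' (fun i => i + k) (fun i => i - k)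
  · intro a ha; exact (mem_Dset_rot k π a).1 ha
  · intro b hb; rw [Finset.mem_coe, mem_Dset_rot]; simpa [sub_add_cancel] using hb
  · intro a _; simp [add_sub_cancel_right]
  · intro b _; simp [sub_add_cancel]
/-- extend a permutation of `Fin m` to `Fin (m+1)`, fixing the last element -/
def extLast (σ : Equiv.Perm (Fin m)) : Equiv.Perm (Fin (m+1)) :=
  Equiv.permCongr finSuccEquivLast.symm σ.optionCongr

lemma extLast_castSucc (σ : Equiv.Perm (Fin m)) (i : Fin m) :
    extLast σ (Fin.castSucc i) = Fin.castSucc (σ i) := by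
  simp [extLast, Equiv.permCongr_apply]

lemma extLast_last (σ : Equiv.Perm (Fin m)) :
    extLast σ (Fin.last m) = Fin.last m := by
  simp [extLast, Equiv.permCongr_apply]

/-- restrict a permutation of `Fin (m+1)` fixing the last element to `Fin m` -/
def restrictLast (π : Equiv.Perm (Fin (m+1))) : Equiv.Perm (Fin m) :=
  Equiv.removeNone (finSuccEquivLast.permCongr π)

lemma extLast_restrictLast (π : Equiv.Perm (Fin (m+1))) (hπ : π (Fin.last m) = Fin.last m) :
    extLast (restrictLast π) = π := by
  apply Equiv.ext
  intro x
  refine Fin.lastCases ?_ ?_ x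
  · rw [extLast_last, hπ]
  · intro i
    rw [extLast_castSucc]
    have hne : π (Fin.castSucc i) ≠ Fin.last m := by
      intro h
      have := π.injective (h.trans hπ.symm)
      exact (Fin.castSucc_lt_last i).ne this
    obtain ⟨j, hj⟩ := Fin.exists_castSucc_eq.2 hne
    rw [← hj]
    congr 1
    have key : some (restrictLast π i) = (finSuccEquivLast.permCongr π) (some i) := by
      apply Equiv.removeNone_some
      refine ⟨j, ?_⟩
      simp [Equiv.permCongr_apply, ← hj]
    simp only [Equiv.permCongr_apply, Equiv.symm_symm, finSuccEquivLast_symm_some, ← hj,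
      finSuccEquivLast_castSucc] at key
    exact Option.some_injective _ key

lemma extLast_injective : Function.Injective (extLast (m := m)) := by
  intro σ τ h
  apply Equiv.ext
  intro i
  have := congrArg (fun p => p (Fin.castSucc i)) h
  simp only [extLast_castSucc] at this
  exact Fin.castSucc_injective m this

lemma numDescents_extLast (hm : 1 ≤ m) (σ : Equiv.Perm (Fin m)) :
    numDescents (m+1) (extLast σ) = numDescents m σ := by
  unfold numDescents
  rw [Nat.add_sub_cancel]
  have hrange : Finset.range m = insert (m-1) (Finset.range (m-1)) := by
    ext x
    simp only [Finset.mem_range, Finset.mem_insert]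
    omega
  rw [hrange, Finset.filter_insert]
  rw [if_neg]
  · congr 1
    apply Finset.filter_congr
    intro i hi
    rw [Finset.mem_range] at hi
    have h1 : i + 1 < m := by omega
    have h2 : i + 1 < m + 1 := by omega
    have e1 : (⟨i+1, h2⟩ : Fin (m+1)) = Fin.castSucc ⟨i+1, h1⟩ := rfl
    have e2 : (⟨i, Nat.lt_of_succ_lt h2⟩ : Fin (m+1)) = Fin.castSucc ⟨i, Nat.lt_of_succ_lt h1⟩ := rfl
    constructor
    · rintro ⟨h, hlt⟩
      refine ⟨h1, ?_⟩
      rw [e1, e2, extLast_castSucc, extLast_castSucc, Fin.castSucc_lt_castSucc_iff] at hlt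
      exact hlt
    · rintro ⟨h, hlt⟩
      refine ⟨h2, ?_⟩
      rw [e1, e2, extLast_castSucc, extLast_castSucc, Fin.castSucc_lt_castSucc_iff]
      exact hlt
  · rintro ⟨h, hlt⟩
    have e1 : (⟨m-1+1, h⟩ : Fin (m+1)) = Fin.last m := by
      apply Fin.ext; simp [Fin.last]; omega
    have e2 : (⟨m-1, Nat.lt_of_succ_lt h⟩ : Fin (m+1)) = Fin.castSucc ⟨m-1, by omega⟩ := rfl
    rw [e1, e2, extLast_last, extLast_castSucc] at hlt
    exact absurd hlt (Fin.lt_asymm (Fin.castSucc_lt_last _))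

lemma card_Dset_extLast (hm : 1 ≤ m) (σ : Equiv.Perm (Fin m)) :
    (Dset m (extLast σ)).card = numDescents m σ + 1 := by
  rw [Dset_card_eq, numDescents_extLast hm, if_pos]
  rw [extLast_last]
  have : (0 : Fin (m+1)) = Fin.castSucc (⟨0, hm⟩ : Fin m) := by
    apply Fin.ext; simp
  rw [this, extLast_castSucc]
  exact Fin.castSucc_lt_last _
lemma rot_zero (π : Equiv.Perm (Fin (m+1))) : rot 0 π = π := by
  apply Equiv.ext
  intro i
  simp [rot_apply]

lemma rot_inv_apply (k : Fin (m+1)) (π : Equiv.Perm (Fin (m+1))) (j : Fin (m+1)) :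
    (rot k π)⁻¹ j = π⁻¹ j - k := by
  rw [← Equiv.Perm.eq_inv_iff_eq, inv_inv, rot_apply, sub_add_cancel,
    Equiv.Perm.coe_inv, Equiv.apply_symm_apply]

lemma cardU_eq (d : ℕ) :
    (Finset.univ.filter (fun π : Equiv.Perm (Fin (m+1)) => (Dset m π).card = d)).card
      = (Finset.univ.filter (fun π : Equiv.Perm (Fin (m+1)) =>
          (Dset m π).card = d ∧ π (Fin.last m) = Fin.last m)).card * (m+1) := by
  have := Finset.card_product
    (Finset.univ.filter (fun π : Equiv.Perm (Fin (m+1)) =>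
      (Dset m π).card = d ∧ π (Fin.last m) = Fin.last m))
    (Finset.univ : Finset (Fin (m+1)))
  rw [Finset.card_univ, Fintype.card_fin] at this
  rw [← this]
  apply Finset.card_nbij'
    (fun σ => (rot (σ⁻¹ (Fin.last m) - Fin.last m) σ, -(σ⁻¹ (Fin.last m) - Fin.last m)))
    (fun p => rot p.2 p.1)
  · intro σ hσ
    simp only [Finset.mem_coe] at hσ ⊢
    rw [Finset.mem_filter] at hσ
    rw [Finset.mem_product, Finset.mem_filter]
    refine ⟨⟨Finset.mem_univ _, ?_, ?_⟩, Finset.mem_univ _⟩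
    · rw [card_Dset_rot]; exact hσ.2
    · rw [rot_apply]
      have h2 : Fin.last m + (σ⁻¹ (Fin.last m) - Fin.last m) = σ⁻¹ (Fin.last m) := by abel
      rw [h2, Equiv.Perm.coe_inv, Equiv.apply_symm_apply]
  · intro p hp
    simp only [Finset.mem_coe] at hp ⊢
    rw [Finset.mem_product, Finset.mem_filter] at hp
    rw [Finset.mem_filter]
    exact ⟨Finset.mem_univ _, by rw [card_Dset_rot]; exact hp.1.2.1⟩
  · intro σ hσ
    simp only
    rw [rot_rot, neg_add_cancel, rot_zero]
  · intro p hp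
    simp only [Finset.mem_coe] at hp ⊢
    rw [Finset.mem_product, Finset.mem_filter] at hp
    obtain ⟨⟨_, hcard, hlast⟩, _⟩ := hp
    have hinv : (rot p.2 p.1)⁻¹ (Fin.last m) = Fin.last m - p.2 := by
      rw [rot_inv_apply,
        show p.1⁻¹ (Fin.last m) = Fin.last m from by
          conv_lhs => rw [← hlast]
          rw [Equiv.Perm.coe_inv, Equiv.symm_apply_apply]]
    have hk : (rot p.2 p.1)⁻¹ (Fin.last m) - Fin.last m = -p.2 := by
      rw [hinv]; abel
    ext
    · simp only [hk]
      rw [rot_rot, neg_add_cancel, rot_zero]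
    · simp only [hk, neg_neg]
lemma cardT_eq (hm : 1 ≤ m) (d : ℕ) (hd : 1 ≤ d) :
    (Finset.univ.filter (fun π : Equiv.Perm (Fin (m+1)) =>
        (Dset m π).card = d ∧ π (Fin.last m) = Fin.last m)).card = eulerianA m d := by
  unfold eulerianA
  apply Finset.card_nbij' restrictLast extLast
  · intro π hπ
    simp only [Finset.mem_coe] at hπ ⊢
    rw [Finset.mem_filter] at hπ
    obtain ⟨_, hcard, hlast⟩ := hπ
    rw [Finset.mem_filter]
    refine ⟨Finset.mem_univ _, ?_⟩
    have h1 := card_Dset_extLast hm (restrictLast π)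
    rw [extLast_restrictLast π hlast] at h1
    omega
  · intro σ hσ
    simp only [Finset.mem_coe] at hσ ⊢
    rw [Finset.mem_filter] at hσ
    rw [Finset.mem_filter]
    refine ⟨Finset.mem_univ _, ?_, extLast_last σ⟩
    rw [card_Dset_extLast hm, hσ.2]
    omega
  · intro π hπ
    simp only [Finset.mem_coe] at hπ ⊢
    rw [Finset.mem_filter] at hπ
    exact extLast_restrictLast π hπ.2.2
  · intro σ _
    apply extLast_injective
    rw [extLast_restrictLast _ (extLast_last σ)]

lemma mem_Dset_last (π : Equiv.Perm (Fin (m+1))) :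
    Fin.last m ∈ Dset m π ↔ π 0 < π (Fin.last m) := by
  unfold Dset
  have hlast : Fin.last m + 1 = 0 := by
    apply Fin.ext; simp [Fin.add_def, Fin.last]
  simp [hlast]

lemma inner_count (d : ℕ) (hd : d ≤ m + 1) (π : Equiv.Perm (Fin (m+1)))
    (hπ : (Dset m π).card = d) :
    (Finset.univ.filter (fun k : Fin (m+1) =>
        (Dset m (rot k π)).card = d ∧ Fin.last m ∉ Dset m (rot k π))).card = (m+1) - d := by
  have hq : ∀ k : Fin (m+1),
      ((Dset m (rot k π)).card = d ∧ Fin.last m ∉ Dset m (rot k π))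
        ↔ ¬ (Fin.last m + k ∈ Dset m π) := by
    intro k
    rw [card_Dset_rot, mem_Dset_rot]
    simp [hπ]
  simp only [hq]
  have hpos : (Finset.univ.filter (fun k : Fin (m+1) => Fin.last m + k ∈ Dset m π)).card = d := by
    rw [← hπ]
    apply Finset.card_nbij' (fun k => Fin.last m + k) (fun j => j - Fin.last m)
    · intro a ha
      simp only [Finset.mem_coe] at ha ⊢
      rw [Finset.mem_filter] at ha
      exact ha.2
    · intro b hb
      simp only [Finset.mem_coe] at hb ⊢
      rw [Finset.mem_filter]
      refine ⟨Finset.mem_univ _, ?_⟩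
      have : Fin.last m + (b - Fin.last m) = b := by abel
      rwa [this]
    · intro a _
      simp
    · intro b _
      simp
  have htot := Finset.card_filter_add_card_filter_not
    (s := (Finset.univ : Finset (Fin (m+1))))
    (p := fun k => Fin.last m + k ∈ Dset m π)
  rw [Finset.card_univ, Fintype.card_fin, hpos] at htot
  omega

lemma cardS_mul (d : ℕ) (hd : d ≤ m + 1) :
    (Finset.univ.filter (fun π : Equiv.Perm (Fin (m+1)) =>
        (Dset m π).card = d ∧ Fin.last m ∉ Dset m π)).card * (m+1)
      = ((m+1) - d) * (Finset.univ.filter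
          (fun π : Equiv.Perm (Fin (m+1)) => (Dset m π).card = d)).card := by
  set S := Finset.univ.filter (fun π : Equiv.Perm (Fin (m+1)) =>
      (Dset m π).card = d ∧ Fin.last m ∉ Dset m π) with hS
  set U := Finset.univ.filter
      (fun π : Equiv.Perm (Fin (m+1)) => (Dset m π).card = d) with hU
  have h1 : ((U ×ˢ Finset.univ).filter (fun p : Equiv.Perm (Fin (m+1)) × Fin (m+1) =>
      rot p.2 p.1 ∈ S)).card = S.card * (m+1) := by
    have := Finset.card_product S (Finset.univ : Finset (Fin (m+1)))
    rw [Finset.card_univ, Fintype.card_fin] at this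
    rw [← this]
    apply Finset.card_nbij' (fun p => (rot p.2 p.1, p.2)) (fun q => (rot (-q.2) q.1, q.2))
    · intro p hp
      simp only [Finset.mem_coe] at hp ⊢
      rw [Finset.mem_filter] at hp
      rw [Finset.mem_product]
      exact ⟨hp.2, Finset.mem_univ _⟩
    · intro q hq
      simp only [Finset.mem_coe] at hq ⊢
      rw [Finset.mem_product] at hq
      rw [Finset.mem_filter, Finset.mem_product]
      have hq1 : q.1 ∈ S := hq.1
      rw [hS, Finset.mem_filter] at hq1
      refine ⟨⟨?_, Finset.mem_univ _⟩, ?_⟩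
      · rw [hU, Finset.mem_filter]
        exact ⟨Finset.mem_univ _, by rw [card_Dset_rot]; exact hq1.2.1⟩
      · simp only
        rw [rot_rot, add_neg_cancel, rot_zero]
        exact hq.1
    · intro p _
      simp only
      rw [rot_rot, neg_add_cancel, rot_zero]
    · intro q _
      simp only
      rw [rot_rot, add_neg_cancel, rot_zero]
  have h2 : ((U ×ˢ Finset.univ).filter (fun p : Equiv.Perm (Fin (m+1)) × Fin (m+1) =>
      rot p.2 p.1 ∈ S)).card = U.card * ((m+1) - d) := by
    rw [Finset.card_filter, Finset.sum_product]
    have hinner : ∀ π ∈ U,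
        (∑ k : Fin (m+1), if rot k π ∈ S then 1 else 0) = (m+1) - d := by
      intro π hπ
      rw [hU, Finset.mem_filter] at hπ
      rw [← Finset.card_filter]
      have horig : (Finset.univ.filter (fun k : Fin (m+1) => rot k π ∈ S))
          = (Finset.univ.filter (fun k : Fin (m+1) =>
              (Dset m (rot k π)).card = d ∧ Fin.last m ∉ Dset m (rot k π))) := by
        apply Finset.filter_congr
        intro k _
        rw [hS, Finset.mem_filter]
        simp
      rw [horig]
      exact inner_count d hd π hπ.2
    rw [Finset.sum_congr rfl hinner, Finset.sum_const, smul_eq_mul]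
  rw [← h1, h2, Nat.mul_comm]
/-- for `n > 1`, the number of permutations of `n` symbols with `d` cyclic
descents and `d` descents is `(n-d)·A_{n-1,d}`. -/
theorem card_cyclicDescents_descents_eq (n d : ℕ) (hn : 1 < n)
    (hd1 : 1 ≤ d) (hd2 : d ≤ n - 1) :
    (Finset.univ.filter (fun π : Equiv.Perm (Fin n) =>
        numCyclicDescents n π = d ∧ numDescents n π = d)).card
      = (n - d) * eulerianA (n - 1) d := by
  obtain ⟨m, rfl⟩ : ∃ m, n = m + 1 := ⟨n - 1, by omega⟩
  have hm : 1 ≤ m := by omega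
  have hfil : (Finset.univ.filter (fun π : Equiv.Perm (Fin (m+1)) =>
        numCyclicDescents (m+1) π = d ∧ numDescents (m+1) π = d))
      = (Finset.univ.filter (fun π : Equiv.Perm (Fin (m+1)) =>
        (Dset m π).card = d ∧ Fin.last m ∉ Dset m π)) := by
    apply Finset.filter_congr
    intro π _
    rw [numCyclicDescents_eq]
    have hD := Dset_card_eq π
    rw [mem_Dset_last]
    constructor
    · rintro ⟨h1, h2⟩
      refine ⟨h1, fun hw => ?_⟩
      rw [if_pos hw] at hD
      omega
    · rintro ⟨h1, h2⟩
      rw [if_neg h2] at hD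
      omega
  rw [hfil]
  have key := cardS_mul (m := m) d (by omega)
  rw [cardU_eq d, cardT_eq hm d hd1] at key
  have hn1 : m + 1 - 1 = m := by omega
  rw [hn1]
  apply Nat.eq_of_mul_eq_mul_right (Nat.succ_pos m)
  rw [key, ← mul_assoc]
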